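/- The oblivious runway encoder f(g, c) = ((g mod 2^p) + 2^p c, (⌊g/2^p⌋ − c) mod 2^{n−p}) is injective from (ℤ/2^nℤ) × (ℤ/2^mℤ) into (ℤ/2^{p+m}ℤ) × (ℤ/2^{n−p}ℤ), and it is surjective (hence bijective) when m ≤ n − p; in particular the runway representation has no leakage values. -/

import Mathlib

/-- **The oblivious runway encoder is injective, and bijective when `m ≤ n − p`.**
For `p ≥ 1` and `p + m ≤ n`, the encoder
`f(g, c) = ((g mod 2^p) + 2^p c, (⌊g/2^p⌋ − c) mod 2^{n−p})` is injective from
`(ℤ/2^nℤ) × (ℤ/2^mℤ)` into `(ℤ/2^{p+m}ℤ) × (ℤ/2^{n−p}ℤ)`, and surjective (hence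
bijective) when `m ≤ n − p`; in particular the runway representation has no leakage
values.  (The subtraction `⌊g/2^p⌋ − c` mod `2^{n−p}` is expressed in `ℕ` as
`⌊g/2^p⌋ + (2^{n−p} − c)` mod `2^{n−p}`, which agrees since `c < 2^m ≤ 2^{n−p}`.) -/
theorem runway_encoder_bijective (n m p : ℕ) (hp : 1 ≤ p) (hpm : p + m ≤ n) :
    Set.InjOn
      (fun gc : ℕ × ℕ =>
        (gc.1 % 2 ^ p + 2 ^ p * gc.2, (gc.1 / 2 ^ p + (2 ^ (n - p) - gc.2)) % 2 ^ (n - p)))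
      (Set.Iio (2 ^ n) ×ˢ Set.Iio (2 ^ m)) ∧
    (m ≤ n - p →
      Set.SurjOn
        (fun gc : ℕ × ℕ =>
          (gc.1 % 2 ^ p + 2 ^ p * gc.2, (gc.1 / 2 ^ p + (2 ^ (n - p) - gc.2)) % 2 ^ (n - p)))
        (Set.Iio (2 ^ n) ×ˢ Set.Iio (2 ^ m))
        (Set.Iio (2 ^ (p + m)) ×ˢ Set.Iio (2 ^ (n - p)))) := by
  set P := 2 ^ p with hP
  set N := 2 ^ (n - p) with hN
  have hPpos : 0 < P := Nat.pow_pos (by norm_num)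
  have hNpos : 0 < N := Nat.pow_pos (by norm_num)
  have hPN : 2 ^ n = P * N := by
    rw [hP, hN, ← pow_add]
    congr 1
    omega
  constructor
  · rintro ⟨g1, c1⟩ ⟨hg1, hc1⟩ ⟨g2, c2⟩ ⟨hg2, hc2⟩ heq
    simp only [Prod.mk.injEq] at heq
    obtain ⟨h1, h2⟩ := heq
    simp only [Set.mem_Iio] at hg1 hc1 hg2 hc2
    -- from first component: residues and c's agree
    have hr : g1 % P = g2 % P := by
      have h := congrArg (· % P) h1
      simp only [Nat.add_mul_mod_self_left, Nat.mod_mod_of_dvd _ dvd_rfl] at h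
      exact h
    have hc : c1 = c2 := by
      have : P * c1 = P * c2 := by omega
      exact Nat.eq_of_mul_eq_mul_left hPpos this
    subst hc
    -- from second component: quotients agree
    have hq1 : g1 / P < N := Nat.div_lt_of_lt_mul (hPN ▸ hg1)
    have hq2 : g2 / P < N := Nat.div_lt_of_lt_mul (hPN ▸ hg2)
    have hq : g1 / P = g2 / P := by
      have hmod : (g1 / P) % N = (g2 / P) % N := by
        have h2' : Nat.ModEq N (g1 / P + (N - c1)) (g2 / P + (N - c1)) := h2
        exact (Nat.ModEq.add_right_cancel' _ h2')
      rwa [Nat.mod_eq_of_lt hq1, Nat.mod_eq_of_lt hq2] at hmod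
    have e1 := Nat.div_add_mod g1 P
    have e2 := Nat.div_add_mod g2 P
    have : g1 = g2 := by rw [← hq] at e2; omega
    simp [this]
  · intro hm
    rintro ⟨a, b⟩ ⟨ha, hb⟩
    simp only [Set.mem_Iio] at ha hb
    have hcN : a / P < 2 ^ m := by
      apply Nat.div_lt_of_lt_mul
      rw [Nat.mul_comm]
      calc a < 2 ^ (p + m) := ha
        _ = 2 ^ m * P := by rw [hP, pow_add, Nat.mul_comm]
    have hcle : a / P ≤ N := le_trans (le_of_lt hcN) (by
      rw [hN]; exact Nat.pow_le_pow_right (by norm_num) hm)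
    set q := (b + a / P) % N with hq
    have hqlt : q < N := Nat.mod_lt _ hNpos
    refine ⟨(P * q + a % P, a / P), ⟨?_, hcN⟩, ?_⟩
    · simp only [Set.mem_Iio]
      have : P * q + a % P < P * q + P := by
        have := Nat.mod_lt a hPpos
        omega
      calc P * q + a % P < P * (q + 1) := by rw [Nat.mul_add, Nat.mul_one]; exact this
        _ ≤ P * N := Nat.mul_le_mul_left _ hqlt
        _ = 2 ^ n := hPN.symm
    · simp only [Prod.mk.injEq]
      have hmodP : (P * q + a % P) % P = a % P := by
        rw [Nat.mul_add_mod]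
        exact Nat.mod_mod_of_dvd _ dvd_rfl
      have hdivP : (P * q + a % P) / P = q := by
        rw [Nat.mul_add_div hPpos, Nat.div_eq_of_lt (Nat.mod_lt a hPpos), Nat.add_zero]
      constructor
      · rw [hmodP, Nat.mod_add_div]
      · rw [hdivP, hq, Nat.mod_add_mod]
        have : b + a / P + (N - a / P) = b + N := by omega
        rw [this, Nat.add_mod_right, Nat.mod_eq_of_lt hb]
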